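/- For every t ∈ [−1,1], the preimage f⁻¹({t}) under Kuratowski's function is crowded: it has no isolated points, i.e., every point of f⁻¹({t}) lies in the closure of f⁻¹({t}) \ {that point}. -/

import Mathlib

open Set Topology

/-- The Cantor space `2^ℕ`, with coordinates indexed by the positive integers. -/
abbrev Cant : Type := ℕ+ → Bool

/-- The support of a point of the Cantor space, as a set of (positive) natural numbers. -/
def ksupp (x : Cant) : Set ℕ := {i | ∃ h : 0 < i, x ⟨i, h⟩ = true}

open scoped Classical in
/-- Kuratowski's function `f(x) = Σ_j (−1)^{c_x(j)} 2^{−j}`, where `c_x` enumerates the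
support of `x` in increasing order; here the summation index `j : ℕ` is the 0-based
version of the paper's 1-based position index, so the weight is `2^{−(j+1)}`. -/
noncomputable def kf (x : Cant) : ℝ :=
  ∑' j : ℕ, if (ksupp x).Infinite ∨ j < (ksupp x).ncard then
    (-1 : ℝ) ^ (Nat.nth (· ∈ ksupp x) j) * (2 : ℝ) ^ (-(j + 1 : ℤ)) else 0

open scoped Classical in
noncomputable def kpt (e : ℕ → ℕ) : Cant := fun i => if (i : ℕ) ∈ Set.range e then true else false

lemma mem_ksupp_iff (x : Cant) (i : ℕ+) : (i : ℕ) ∈ ksupp x ↔ x i = true := by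
  constructor
  · rintro ⟨h, hx⟩
    exact hx
  · intro h
    exact ⟨i.2, h⟩

open scoped Classical in
lemma ksupp_kpt (e : ℕ → ℕ) (he : ∀ j, 0 < e j) : ksupp (kpt e) = Set.range e := by
  have hpos : ∀ i, i ∈ Set.range e → 0 < i := by rintro _ ⟨j, rfl⟩; exact he j
  ext i
  simp only [ksupp, kpt, Set.mem_setOf_eq, PNat.mk_coe]
  constructor
  · rintro ⟨h, hx⟩
    by_contra hc
    simp only [hc, if_false] at hx
    exact Bool.false_ne_true hx
  · intro hr
    exact ⟨hpos i hr, by simp only [hr, if_true]⟩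

lemma two_zpow_eq (j : ℕ) : (2 : ℝ) ^ (-(j + 1 : ℤ)) = (2⁻¹ : ℝ) ^ (j + 1) := by
  rw [inv_pow, ← zpow_natCast (2 : ℝ) (j + 1), ← zpow_neg]
  push_cast
  ring_nf

lemma summable_kfterm (e : ℕ → ℕ) :
    Summable (fun j : ℕ => (-1 : ℝ) ^ (e j) * (2 : ℝ) ^ (-(j + 1 : ℤ))) := by
  apply Summable.of_norm
  have h : ∀ j : ℕ, ‖(-1 : ℝ) ^ (e j) * (2 : ℝ) ^ (-(j + 1 : ℤ))‖ = (2⁻¹ : ℝ) ^ (j + 1) := by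
    intro j
    rw [norm_mul, norm_pow, norm_neg, norm_one, one_pow, one_mul]
    rw [Real.norm_eq_abs, abs_of_pos (by positivity), two_zpow_eq]
  rw [funext h]
  exact (summable_geometric_two' 1).congr (by intro j; simp [pow_succ]; ring) |>.congr
    (fun j => rfl)

lemma kf_enum (x : Cant) (e : ℕ → ℕ) (he : StrictMono e) (hr : ksupp x = Set.range e) :
    kf x = ∑' j : ℕ, (-1 : ℝ) ^ (e j) * (2 : ℝ) ^ (-(j + 1 : ℤ)) := by
  have hinf : (ksupp x).Infinite := by
    rw [hr]; exact Set.infinite_range_of_injective he.injective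
  have hset : setOf (· ∈ ksupp x) = ksupp x := rfl
  have hnthmono : StrictMono (Nat.nth (· ∈ ksupp x)) := Nat.nth_strictMono (by exact hinf)
  have hnth : Nat.nth (· ∈ ksupp x) = e := by
    refine (hnthmono.range_inj he).mp ?_
    rw [Nat.range_nth_of_infinite (by exact hinf), Set.setOf_mem_eq, hr]
  rw [kf]
  exact tsum_congr fun j => by rw [if_pos (Or.inl hinf), hnth]

lemma kf_finite (x : Cant) (hfin : (ksupp x).Finite) :
    kf x = ∑ j ∈ Finset.range (ksupp x).ncard,
      (-1 : ℝ) ^ (Nat.nth (· ∈ ksupp x) j) * (2 : ℝ) ^ (-(j + 1 : ℤ)) := by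
  rw [kf]
  rw [tsum_eq_sum (s := Finset.range (ksupp x).ncard) (by
    intro j hj
    rw [if_neg]
    push_neg
    exact ⟨hfin, by simpa using hj⟩)]
  exact Finset.sum_congr rfl fun j hj => by
    rw [if_pos (Or.inr (by simpa using hj))]

open scoped Classical in
lemma kpt_apply (e : ℕ → ℕ) (i : ℕ+) : kpt e i = true ↔ (i : ℕ) ∈ Set.range e := by
  unfold kpt
  split_ifs with h <;> simp [h]

lemma crowded_of_seq (t : ℝ) (x : Cant) (hx : kf x = t) (y : ℕ → Cant)
    (hkf : ∀ n, kf (y n) = kf x) (hne : ∀ n, y n ≠ x)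
    (hagree : ∀ i : ℕ+, ∀ᶠ n in Filter.atTop, y n i = x i) :
    x ∈ closure ((kf ⁻¹' {t}) \ {x}) := by
  apply mem_closure_of_tendsto (f := y) (b := Filter.atTop)
  · rw [tendsto_pi_nhds]
    intro i
    exact Filter.Tendsto.congr' ((hagree i).mono fun n h => h.symm) tendsto_const_nhds
  · exact Filter.Eventually.of_forall fun n =>
      ⟨by simp [Set.mem_preimage, hkf n, hx], by simpa using hne n⟩

/-- For every `t ∈ [−1,1]` the preimage `f⁻¹({t})` under Kuratowski's function is crowded:
every one of its points lies in the closure of the preimage minus that point. -/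
theorem kf_preimage_crowded (t : ℝ) (ht : t ∈ Icc (-1 : ℝ) 1) (x : Cant)
    (hx : x ∈ kf ⁻¹' {t}) : x ∈ closure ((kf ⁻¹' {t}) \ {x}) := by
  have hxt : kf x = t := by simpa using hx
  by_cases hinf : (ksupp x).Infinite
  · -- infinite support case
    set e : ℕ → ℕ := Nat.nth (· ∈ ksupp x) with he_def
    have hsetof : setOf (· ∈ ksupp x) = ksupp x := rfl
    have hem : StrictMono e := Nat.nth_strictMono (by exact hinf)
    have hrange : ksupp x = Set.range e := by
      rw [he_def, Nat.range_nth_of_infinite (by exact hinf), Set.setOf_mem_eq]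
    have hemem : ∀ j, e j ∈ ksupp x := fun j =>
      Nat.nth_mem_of_infinite (by exact hinf) j
    have hepos : ∀ j, 0 < e j := fun j => (hemem j).choose
    set E : ℕ → ℕ → ℕ := fun n j => if j < n then e j else e j + 2 with hE_def
    have hEmono : ∀ n, StrictMono (E n) := by
      intro n
      apply strictMono_nat_of_lt_succ
      intro j
      have h1 : e j < e (j + 1) := hem (Nat.lt_succ_self j)
      simp only [hE_def]
      split_ifs <;> omega
    have hEpos : ∀ n j, 0 < E n j := by
      intro n j
      have := hepos j
      simp only [hE_def]
      split_ifs <;> omega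
    have hEge : ∀ n j, ¬ j < n → e n ≤ E n j := by
      intro n j hj
      have : e n ≤ e j := hem.monotone (by omega)
      simp only [hE_def]
      split_ifs <;> omega
    apply crowded_of_seq t x hxt (fun n => kpt (E n))
    · intro n
      rw [kf_enum (kpt (E n)) (E n) (hEmono n) (ksupp_kpt (E n) (hEpos n)),
        kf_enum x e hem hrange]
      refine tsum_congr fun j => ?_
      simp only [hE_def]
      split_ifs with h
      · rfl
      · rw [pow_add, neg_one_sq, mul_one]
    · intro n hyx
      have hx1 : x ⟨e n, hepos n⟩ = true := by
        exact (mem_ksupp_iff x ⟨e n, hepos n⟩).mp (hemem n)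
      have hy1 : kpt (E n) ⟨e n, hepos n⟩ = false := by
        rw [Bool.eq_false_iff]
        intro hc
        replace hc := (kpt_apply _ _).mp hc
        obtain ⟨j, hj⟩ := hc
        simp only [PNat.mk_coe] at hj
        by_cases h : j < n
        · have h4 : e j < e n := hem h
          simp only [hE_def, if_pos h] at hj
          omega
        · have h3 : e n ≤ e j := hem.monotone (by omega)
          simp only [hE_def, if_neg h] at hj
          omega
      rw [hyx, hx1] at hy1
      simp at hy1
    · intro i
      rw [Filter.eventually_atTop]
      refine ⟨(i : ℕ) + 1, fun n hn => ?_⟩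
      have hilt : (i : ℕ) < e n := lt_of_lt_of_le (by omega) hem.le_apply
      have hiff : (kpt (E n) i = true) ↔ (x i = true) := by
        rw [kpt_apply, ← mem_ksupp_iff, hrange]
        constructor
        · rintro ⟨j, hj⟩
          by_cases h : j < n
          · exact ⟨j, by simpa only [hE_def, if_pos h] using hj⟩
          · have := hEge n j h
            omega
        · rintro ⟨j, hj⟩
          have hjn : j < n := by
            by_contra h
            have : e n ≤ e j := hem.monotone (by omega)
            omega
          exact ⟨j, by simp only [hE_def, if_pos hjn]; exact hj⟩
      cases hy2 : x i
      · rw [Bool.eq_false_iff]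
        intro hc
        rw [hiff, hy2] at hc
        exact Bool.false_ne_true hc
      · exact hiff.mpr hy2
  · -- finite support case
    have hfin : (ksupp x).Finite := Set.not_infinite.mp hinf
    set k := (ksupp x).ncard with hk_def
    have hsetof : setOf (· ∈ ksupp x) = ksupp x := rfl
    have hcard : hfin.toFinset.card = k := by
      rw [hk_def, Set.ncard_eq_toFinset_card _ hfin]
    obtain ⟨M, hM⟩ := hfin.bddAbove
    have hMle : ∀ i ∈ ksupp x, i ≤ M := fun i hi => hM hi
    set c : ℕ → ℕ := Nat.nth (· ∈ ksupp x) with hc_def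
    have hcmem : ∀ j, j < k → c j ∈ ksupp x := by
      intro j hj
      exact Nat.nth_mem_of_lt_card (by exact hfin) (by omega)
    have hcpos : ∀ j, j < k → 0 < c j := fun j hj => (hcmem j hj).choose
    have hcle : ∀ j, j < k → c j ≤ M := fun j hj => hMle _ (hcmem j hj)
    have hclt : ∀ {a b : ℕ}, a < b → b < k → c a < c b := by
      intro a b hab hb
      exact Nat.nth_lt_nth_of_lt_card (by exact hfin) hab (by omega)
    set A : ℕ → ℕ := fun n => 2 * (M + n + 1) with hA_def
    set E : ℕ → ℕ → ℕ := fun n j =>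
      if j < k then c j else if j = k then A n else A n + 2 * (j - k) - 1 with hE_def
    have hAM : ∀ n, M < A n := fun n => by simp only [hA_def]; omega
    have hEmono : ∀ n, StrictMono (E n) := by
      intro n
      apply strictMono_nat_of_lt_succ
      intro j
      simp only [hE_def]
      rcases lt_trichotomy (j + 1) k with h | h | h
      · rw [if_pos (by omega), if_pos h]
        exact hclt (Nat.lt_succ_self j) h
      · rw [if_pos (by omega), if_neg (by omega), if_pos h]
        have := hcle j (by omega)
        have := hAM n
        omega
      · rw [if_neg (by omega)]
        by_cases hj : j = k
        · rw [if_pos hj, if_neg (by omega), if_neg (by omega)]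
          omega
        · rw [if_neg hj, if_neg (by omega), if_neg (by omega)]
          omega
    have hEpos : ∀ n j, 0 < E n j := by
      intro n j
      simp only [hE_def, hA_def]
      split_ifs with h1 h2
      · exact hcpos j h1
      · omega
      · omega
    have hEbig : ∀ n j, ¬ j < k → A n ≤ E n j := by
      intro n j h
      simp only [hE_def]
      rw [if_neg h]
      split_ifs <;> omega
    apply crowded_of_seq t x hxt (fun n => kpt (E n))
    · intro n
      rw [kf_enum (kpt (E n)) (E n) (hEmono n) (ksupp_kpt (E n) (hEpos n)),
        kf_finite x hfin]
      rw [← Summable.sum_add_tsum_nat_add (f := fun j : ℕ =>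
        (-1 : ℝ) ^ (E n j) * (2 : ℝ) ^ (-(j + 1 : ℤ))) (k + 1) (summable_kfterm (E n))]
      have hfront : ∀ j ∈ Finset.range k,
          (-1 : ℝ) ^ (E n j) * (2 : ℝ) ^ (-(j + 1 : ℤ))
            = (-1 : ℝ) ^ (c j) * (2 : ℝ) ^ (-(j + 1 : ℤ)) := by
        intro j hj
        rw [Finset.mem_range] at hj
        simp only [hE_def, if_pos hj]
      have hgk : (-1 : ℝ) ^ (E n k) * (2 : ℝ) ^ (-(k + 1 : ℤ))
          = (2 : ℝ) ^ (-(k + 1 : ℤ)) := by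
        have hEk : E n k = A n := by simp [hE_def]
        rw [hEk, Even.neg_one_pow ⟨M + n + 1, by simp only [hA_def]; ring⟩, one_mul]
      have htail : ∑' i : ℕ, (-1 : ℝ) ^ (E n (i + (k + 1))) * (2 : ℝ) ^ (-(↑(i + (k + 1)) + 1 : ℤ))
          = -(2 : ℝ) ^ (-(k + 1 : ℤ)) := by
        have h1 : ∀ i : ℕ, (-1 : ℝ) ^ (E n (i + (k + 1))) * (2 : ℝ) ^ (-(↑(i + (k + 1)) + 1 : ℤ))
            = -((2 : ℝ) ^ (-(k + 2 : ℤ)) * (2⁻¹ : ℝ) ^ i) := by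
          intro i
          have hE1 : E n (i + (k + 1)) = 2 * (M + n + 1 + i) + 1 := by
            simp only [hE_def, hA_def]
            rw [if_neg (by omega), if_neg (by omega)]
            omega
          rw [hE1, Odd.neg_one_pow ⟨M + n + 1 + i, by ring⟩]
          have h2 : ((2 : ℝ)⁻¹) ^ i = (2 : ℝ) ^ (-(i : ℤ)) := by
            rw [zpow_neg, zpow_natCast, inv_pow]
          rw [h2, ← zpow_add₀ (two_ne_zero : (2 : ℝ) ≠ 0)]
          rw [neg_one_mul, neg_inj]
          congr 1
          push_cast
          ring
        rw [tsum_congr h1, tsum_neg, tsum_mul_left, tsum_geometric_inv_two]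
        have hexp : (-(k + 2 : ℤ)) + 1 = -(k + 1 : ℤ) := by ring
        rw [neg_inj, ← zpow_add_one₀ (two_ne_zero : (2 : ℝ) ≠ 0), hexp]
      rw [Finset.sum_range_succ, Finset.sum_congr rfl hfront, hgk, htail]
      push_cast
      ring
    · intro n hyx
      have hy1 : kpt (E n) ⟨A n, by simp only [hA_def]; omega⟩ = true := by
        refine (kpt_apply _ _).mpr ?_
        exact ⟨k, by simp [hE_def]⟩
      have hx1 : x ⟨A n, by simp only [hA_def]; omega⟩ = false := by
        rw [Bool.eq_false_iff]
        intro hc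
        have := (mem_ksupp_iff x _).mpr hc
        simp only [PNat.mk_coe] at this
        exact absurd (hMle _ this) (by have := hAM n; omega)
      rw [hyx, hx1] at hy1
      simp at hy1
    · intro i
      rw [Filter.eventually_atTop]
      refine ⟨(i : ℕ) + 1, fun n hn => ?_⟩
      have hilt : (i : ℕ) < A n := by simp only [hA_def]; omega
      have hiff : (kpt (E n) i = true) ↔ (x i = true) := by
        rw [kpt_apply, ← mem_ksupp_iff]
        constructor
        · rintro ⟨j, hj⟩
          by_cases h : j < k
          · rw [← hj]
            simp only [hE_def, if_pos h]
            exact hcmem j h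
          · have := hEbig n j h
            omega
        · intro hmem
          have hrsub : ksupp x ⊆ Set.range c := Nat.subset_range_nth
          obtain ⟨j, hj⟩ := hrsub hmem
          have hjk : j < k := by
            by_contra h
            have h0 : c j = 0 := Nat.nth_of_card_le (by exact hfin) (by omega)
            have hipos : 0 < (i : ℕ) := i.2
            omega
          exact ⟨j, by simp only [hE_def, if_pos hjk]; exact hj⟩
      cases hy2 : x i
      · rw [Bool.eq_false_iff]
        intro hc
        rw [hiff, hy2] at hc
        exact Bool.false_ne_true hc
      · exact hiff.mpr hy2
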